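/- arXiv:2008.00780 — 2 statements merged into one kernel-verified Lean document; each statement's English description precedes it below -/
import Mathlib

section
/- If the approximate value function Q satisfies Q(x) ≥ V_{t+1}(x) for all x ∈ X, then for any vector μ ∈ ℝ^n and any reference state x̂ ∈ X, the Lagrangian cut H(x) := v − ⟨μ, x̂ − x⟩ with v := max_{d∈D, z∈X} { λ Σ_{s∈S} P_s(d)(r + d_s + Q(z + 1_s)) + (1 − λ Σ_s P_s(d)) Q(z) + ⟨μ, x̂ − z⟩ } satisfies H(x) ≥ V_t(x) for all x ∈ X, where V_t = T V_{t+1}. -/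
private lemma ereal_coe_sum {α : Type*} (s : Finset α) (f : α → ℝ) :
    ((∑ i ∈ s, f i : ℝ) : EReal) = ∑ i ∈ s, ((f i : ℝ) : EReal) := by
  induction s using Finset.cons_induction with
  | empty => simp
  | cons a s ha ih => rw [Finset.sum_cons, Finset.sum_cons, EReal.coe_add, ih]

/-- The Lagrangian cut H(x) = v − ⟨μ, x̂ − x⟩ built from an upper-bounding
approximate value function Q is an upper bound on the exact value function V_t = T V_{t+1}. -/
theorem lagrangian_cut_upper_bound {n : ℕ} (xbar : Fin n → ℤ)
    (D : Set (Fin n → ℝ)) (hDne : D.Nonempty)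
    (P : (Fin n → ℝ) → Fin n → ℝ) (lam r : ℝ)
    (hlam : 0 < lam ∧ lam ≤ 1)
    (hP : ∀ d ∈ D, ∀ s, 0 ≤ P d s)
    (hPsum : ∀ d ∈ D, ∑ s, P d s < 1)
    (T : ((Fin n → ℤ) → EReal) → (Fin n → ℤ) → EReal)
    (hT : ∀ V x, T V x = ⨆ d : D,
        ((lam : EReal) * ∑ s, ((P d s : ℝ) : EReal) *
            (((r + (d : Fin n → ℝ) s : ℝ) : EReal) + V (x + Pi.single s 1)) +
          (((1 - lam * ∑ s, P d s : ℝ) : EReal) * V x)))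
    (V1 : (Fin n → ℤ) → EReal)
    (hV1out : ∀ x : Fin n → ℤ, ¬(0 ≤ x ∧ x ≤ xbar) → V1 x = ⊥)
    (Q : (Fin n → ℤ) → ℝ)
    (hQ : ∀ x : Fin n → ℤ, V1 x ≤ (Q x : EReal))
    (μ : Fin n → ℝ) (xhat : Fin n → ℤ) (hxhat : 0 ≤ xhat ∧ xhat ≤ xbar)
    (v : ℝ)
    -- v is the attained maximum over d ∈ D and z ∈ X of the Lagrangian relaxation
    (hv : IsGreatest {w : ℝ | ∃ d ∈ D, ∃ z : Fin n → ℤ, 0 ≤ z ∧ z ≤ xbar ∧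
        w = lam * ∑ s, P d s * (r + d s + Q (z + Pi.single s 1))
          + (1 - lam * ∑ s, P d s) * Q z
          + ∑ s, μ s * ((xhat s : ℤ) - (z s : ℤ) : ℤ)} v)
    (H : (Fin n → ℤ) → ℝ)
    (hH : ∀ x, H x = v - ∑ s, μ s * ((xhat s : ℤ) - (x s : ℤ) : ℤ)) :
    ∀ x : Fin n → ℤ, 0 ≤ x → x ≤ xbar → T V1 x ≤ (H x : EReal) := by
  intro x hx0 hx1
  rw [hT]
  apply iSup_le
  rintro ⟨d, hd⟩
  -- real-valued upper bound for this d
  set w : ℝ := lam * ∑ s, P d s * (r + d s + Q (x + Pi.single s 1))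
      + (1 - lam * ∑ s, P d s) * Q x with hw
  have hmem : w + ∑ s, μ s * ((xhat s : ℤ) - (x s : ℤ) : ℤ) ∈ {w : ℝ | ∃ d ∈ D,
      ∃ z : Fin n → ℤ, 0 ≤ z ∧ z ≤ xbar ∧
      w = lam * ∑ s, P d s * (r + d s + Q (z + Pi.single s 1))
        + (1 - lam * ∑ s, P d s) * Q z
        + ∑ s, μ s * ((xhat s : ℤ) - (z s : ℤ) : ℤ)} := ⟨d, hd, x, hx0, hx1, rfl⟩
  have hwv : w ≤ H x := by
    have := hv.2 hmem
    rw [hH]; linarith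
  -- bound the EReal expression by (w : EReal)
  have hcoef : (0:ℝ) ≤ 1 - lam * ∑ s, P d s := by
    have h1 : ∑ s, P d s < 1 := hPsum d hd
    have h2 : 0 ≤ ∑ s, P d s := Finset.sum_nonneg fun s _ => hP d hd s
    nlinarith [hlam.1, hlam.2]
  have hsum : (∑ s, ((P d s : ℝ) : EReal) *
        (((r + d s : ℝ) : EReal) + V1 (x + Pi.single s 1))) ≤
      ((∑ s, P d s * (r + d s + Q (x + Pi.single s 1)) : ℝ) : EReal) := by
    rw [ereal_coe_sum]
    apply Finset.sum_le_sum
    intro s _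
    have h1 : ((r + d s : ℝ) : EReal) + V1 (x + Pi.single s 1)
        ≤ ((r + d s + Q (x + Pi.single s 1) : ℝ) : EReal) := by
      rw [EReal.coe_add (r + d s)]
      exact add_le_add le_rfl (hQ _)
    calc ((P d s : ℝ) : EReal) * (((r + d s : ℝ) : EReal) + V1 (x + Pi.single s 1))
        ≤ ((P d s : ℝ) : EReal) * ((r + d s + Q (x + Pi.single s 1) : ℝ) : EReal) :=
          mul_le_mul_of_nonneg_left h1 (by exact_mod_cast hP d hd s)
      _ = ((P d s * (r + d s + Q (x + Pi.single s 1)) : ℝ) : EReal) := by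
          rw [EReal.coe_mul]
  have h2 : (((1 - lam * ∑ s, P d s : ℝ) : EReal) * V1 x)
      ≤ (((1 - lam * ∑ s, P d s) * Q x : ℝ) : EReal) := by
    rw [EReal.coe_mul]
    exact mul_le_mul_of_nonneg_left (hQ x) (by exact_mod_cast hcoef)
  have h3 : ((lam : EReal) * ∑ s, ((P d s : ℝ) : EReal) *
        (((r + d s : ℝ) : EReal) + V1 (x + Pi.single s 1)))
      ≤ ((lam * ∑ s, P d s * (r + d s + Q (x + Pi.single s 1)) : ℝ) : EReal) := by
    rw [EReal.coe_mul]
    exact mul_le_mul_of_nonneg_left hsum (by exact_mod_cast hlam.1.le)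
  calc ((lam : EReal) * ∑ s, ((P d s : ℝ) : EReal) *
        (((r + d s : ℝ) : EReal) + V1 (x + Pi.single s 1)) +
        (((1 - lam * ∑ s, P d s : ℝ) : EReal) * V1 x))
      ≤ ((lam * ∑ s, P d s * (r + d s + Q (x + Pi.single s 1)) : ℝ) : EReal)
        + (((1 - lam * ∑ s, P d s) * Q x : ℝ) : EReal) := add_le_add h3 h2
    _ = (w : EReal) := by rw [hw, EReal.coe_add]
    _ ≤ (H x : EReal) := by exact_mod_cast hwv
end

section
/- For the multinomial logit model, the expected one-step revenue function p ↦ λ Σ_{s∈S} p_s (r + (ln(p_s/p₀) − β_c − β_s)/β_d + v_s) + (1 − λ Σ_{s∈S} p_s) v₀, with p₀ = 1 − Σ_{s∈S} p_s, is a concave function of p on the open simplex {p ∈ ℝ^n : p_s > 0 for all s, Σ_s p_s < 1}, when β_d < 0. -/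
open Finset

/-- Composition of a convex function on `t ⊆ ℝ` with an affine map `p ↦ c + L p`. -/
lemma convexOn_comp_affine {n : ℕ} {φ : ℝ → ℝ} {t : Set ℝ} (hφ : ConvexOn ℝ t φ)
    (L : (Fin n → ℝ) →ₗ[ℝ] ℝ) (c : ℝ) {D : Set (Fin n → ℝ)} (hD : Convex ℝ D)
    (hmap : ∀ p ∈ D, c + L p ∈ t) :
    ConvexOn ℝ D (fun p => φ (c + L p)) := by
  refine ⟨hD, fun x hx y hy a b ha hb hab => ?_⟩
  have key : c + L (a • x + b • y) = a • (c + L x) + b • (c + L y) := by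
    rw [map_add, map_smul, map_smul]
    simp only [smul_eq_mul]
    have : a * c + b * c = c := by rw [← add_mul, hab, one_mul]
    linarith [this]
  show φ (c + L (a • x + b • y)) ≤ a • φ (c + L x) + b • φ (c + L y)
  rw [key]
  exact hφ.2 (hmap x hx) (hmap y hy) ha hb hab

/-- An affine function `p ↦ c + L p` is concave on any convex set. -/
lemma concaveOn_affine {n : ℕ} (L : (Fin n → ℝ) →ₗ[ℝ] ℝ) (c : ℝ) {D : Set (Fin n → ℝ)}
    (hD : Convex ℝ D) : ConcaveOn ℝ D (fun p => c + L p) := by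
  refine ⟨hD, fun x hx y hy a b ha hb hab => le_of_eq ?_⟩
  show a • (c + L x) + b • (c + L y) = c + L (a • x + b • y)
  rw [map_add, map_smul, map_smul]
  simp only [smul_eq_mul]
  have : a * c + b * c = c := by rw [← add_mul, hab, one_mul]
  linarith [this]

/-- Weighted-sum linear map. -/
noncomputable def wsum {n : ℕ} (d : Fin n → ℝ) : (Fin n → ℝ) →ₗ[ℝ] ℝ where
  toFun := fun p => ∑ s, d s * p s
  map_add' := by
    intro x y
    simp [Pi.add_apply, mul_add, Finset.sum_add_distrib]
  map_smul' := by
    intro c x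
    simp [Finset.mul_sum, mul_left_comm]

lemma convexOn_finset_sum {n : ℕ} {ι : Type*} (t : Finset ι) {D : Set (Fin n → ℝ)}
    (hD : Convex ℝ D) {g : ι → (Fin n → ℝ) → ℝ} (h : ∀ i ∈ t, ConvexOn ℝ D (g i)) :
    ConvexOn ℝ D (fun x => ∑ i ∈ t, g i x) := by
  classical
  induction t using Finset.induction with
  | empty => simpa using convexOn_const 0 hD
  | @insert a t hni ih =>
    simp only [Finset.sum_insert hni]
    exact (h a (Finset.mem_insert_self a t)).add
      (ih fun i hi => h i (Finset.mem_insert_of_mem hi))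

lemma wsum_apply {n : ℕ} (d : Fin n → ℝ) (p : Fin n → ℝ) :
    wsum d p = ∑ s, d s * p s := rfl

/-- For the multinomial logit model with βd < 0, the expected one-step
revenue, as a function of the purchase probabilities p on the open simplex, is concave. -/
theorem mnl_revenue_concave {n : ℕ} (lam r : ℝ) (hlam : 0 < lam ∧ lam ≤ 1)
    (βc : ℝ) (β : Fin n → ℝ) (βd : ℝ) (hβd : βd < 0)
    (v0 : ℝ) (v : Fin n → ℝ)
    (f : (Fin n → ℝ) → ℝ)
    (hf : ∀ p, f p = lam * ∑ s, p s *
        (r + (Real.log (p s / (1 - ∑ k, p k)) - βc - β s) / βd + v s)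
      + (1 - lam * ∑ s, p s) * v0) :
    ConcaveOn ℝ {p : Fin n → ℝ | (∀ s, 0 < p s) ∧ ∑ s, p s < 1} f := by
  set D : Set (Fin n → ℝ) := {p : Fin n → ℝ | (∀ s, 0 < p s) ∧ ∑ s, p s < 1} with hDdef
  have hβd0 : βd ≠ 0 := hβd.ne
  -- convexity of D
  have hD : Convex ℝ D := by
    intro x hx y hy a b ha hb hab
    obtain ⟨hx1, hx2⟩ := hx
    obtain ⟨hy1, hy2⟩ := hy
    constructor
    · intro s
      simp only [Pi.add_apply, Pi.smul_apply, smul_eq_mul]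
      rcases eq_or_lt_of_le ha with h | h
      · have hb1 : b = 1 := by linarith
        simp [← h, hb1]
        exact hy1 s
      · have := mul_nonneg hb (hy1 s).le
        nlinarith [hx1 s]
    · simp only [Pi.add_apply, Pi.smul_apply, smul_eq_mul, Finset.sum_add_distrib,
        ← Finset.mul_sum]
      rcases ha.lt_or_eq with hapos | ha0
      · have h1 : a * ∑ i, x i < a * 1 := by
          exact mul_lt_mul_of_pos_left hx2 hapos
        have h2 : b * ∑ i, y i ≤ b * 1 := by
          exact mul_le_mul_of_nonneg_left hy2.le hb
        nlinarith
      · have hb1 : b = 1 := by linarith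
        rw [← ha0, hb1]
        simpa using hy2
  have hmem : ∀ p ∈ D, (0:ℝ) < 1 - ∑ k, p k := by
    intro p hp
    have := hp.2
    linarith
  -- the negative-sum linear map
  set Lneg : (Fin n → ℝ) →ₗ[ℝ] ℝ := wsum (fun _ => (-1 : ℝ)) with hLneg
  have hLneg_apply : ∀ p, Lneg p = -∑ k, p k := by
    intro p
    simp [hLneg, wsum_apply, Finset.sum_neg_distrib]
  -- convex pieces
  have hφ : ConvexOn ℝ (Set.Ici (0:ℝ)) (fun x : ℝ => x * Real.log x) :=
    Real.convexOn_mul_log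
  have hml : ConvexOn ℝ (Set.Ioi (0:ℝ)) (fun x : ℝ => -Real.log x) :=
    strictConcaveOn_log_Ioi.concaveOn.neg
  have hterm1 : ∀ s : Fin n, ConvexOn ℝ D (fun p => p s * Real.log (p s)) := by
    intro s
    have := convexOn_comp_affine hφ (LinearMap.proj s) 0 hD
      (fun p hp => by simpa using (hp.1 s).le)
    simpa using this
  have hterm2 : ConvexOn ℝ D
      (fun p => (1 - ∑ k, p k) * Real.log (1 - ∑ k, p k)) := by
    have h := convexOn_comp_affine hφ Lneg 1 hD
      (fun p hp => by
        have := hmem p hp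
        rw [hLneg_apply]
        simp only [Set.mem_Ici]
        linarith)
    have he : (fun p : Fin n → ℝ => (1 - ∑ k, p k) * Real.log (1 - ∑ k, p k))
        = fun p => (1 + Lneg p) * Real.log (1 + Lneg p) := by
      funext p
      rw [hLneg_apply, ← sub_eq_add_neg]
    rw [he]
    exact h
  have hterm3 : ConvexOn ℝ D (fun p => -Real.log (1 - ∑ k, p k)) := by
    have h := convexOn_comp_affine hml Lneg 1 hD
      (fun p hp => by
        have := hmem p hp
        rw [hLneg_apply]
        simp only [Set.mem_Ioi]
        linarith)
    have he : (fun p : Fin n → ℝ => -Real.log (1 - ∑ k, p k))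
        = fun p => -Real.log (1 + Lneg p) := by
      funext p
      rw [hLneg_apply, ← sub_eq_add_neg]
    rw [he]
    exact h
  -- g convex
  have hg : ConvexOn ℝ D (fun p =>
      (∑ s, p s * Real.log (p s)) + (1 - ∑ k, p k) * Real.log (1 - ∑ k, p k)
        - Real.log (1 - ∑ k, p k)) := by
    have hsum : ConvexOn ℝ D (fun p => ∑ s, p s * Real.log (p s)) :=
      convexOn_finset_sum Finset.univ hD (fun s _ => hterm1 s)
    have h := (hsum.add hterm2).add hterm3
    have he : (fun p : Fin n → ℝ =>
        (∑ s, p s * Real.log (p s)) + (1 - ∑ k, p k) * Real.log (1 - ∑ k, p k)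
          - Real.log (1 - ∑ k, p k))
        = fun p => ((∑ s, p s * Real.log (p s))
            + (1 - ∑ k, p k) * Real.log (1 - ∑ k, p k)) + -Real.log (1 - ∑ k, p k) := by
      funext p
      ring
    rw [he]
    exact h
  -- affine part
  set dA : Fin n → ℝ := fun s => lam * (r + v s - (βc + β s) / βd) - lam * v0 with hdA
  have hA : ConcaveOn ℝ D (fun p => v0 + wsum dA p) := concaveOn_affine _ _ hD
  -- combine
  set c0 : ℝ := lam / βd with hc0
  have hc0neg : 0 ≤ -c0 := by
    rw [hc0]
    have : lam / βd < 0 := div_neg_of_pos_of_neg hlam.1 hβd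
    linarith
  have hF : ConcaveOn ℝ D (fun p => (v0 + wsum dA p) +
      (-c0) * (-((∑ s, p s * Real.log (p s)) + (1 - ∑ k, p k) * Real.log (1 - ∑ k, p k)
        - Real.log (1 - ∑ k, p k)))) := by
    have h2 : ConcaveOn ℝ D ((-c0) • (fun p =>
        -((∑ s, p s * Real.log (p s)) + (1 - ∑ k, p k) * Real.log (1 - ∑ k, p k)
          - Real.log (1 - ∑ k, p k)))) := (hg.neg).smul hc0neg
    exact hA.add h2
  -- transfer via pointwise equality on D
  refine ⟨hD, fun x hx y hy a b ha hb hab => ?_⟩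
  have heq : ∀ p ∈ D, f p = (v0 + wsum dA p) +
      (-c0) * (-((∑ s, p s * Real.log (p s)) + (1 - ∑ k, p k) * Real.log (1 - ∑ k, p k)
        - Real.log (1 - ∑ k, p k))) := by
    intro p hp
    have hP0 : (0:ℝ) < 1 - ∑ k, p k := hmem p hp
    rw [hf]
    have hsum1 : ∑ s, p s * (r + (Real.log (p s / (1 - ∑ k, p k)) - βc - β s) / βd + v s)
        = ∑ s, (p s * (r + v s - (βc + β s) / βd)
            + p s * Real.log (p s) / βd - p s * Real.log (1 - ∑ k, p k) / βd) := by
      refine Finset.sum_congr rfl fun s _ => ?_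
      rw [Real.log_div (hp.1 s).ne' hP0.ne']
      field_simp
      ring
    rw [hsum1, wsum_apply]
    simp only [Finset.sum_add_distrib, Finset.sum_sub_distrib, hdA]
    rw [show ∑ s, (lam * (r + v s - (βc + β s) / βd) - lam * v0) * p s
        = lam * (∑ s, p s * (r + v s - (βc + β s) / βd)) - lam * v0 * ∑ s, p s by
      rw [Finset.mul_sum, Finset.mul_sum]
      rw [← Finset.sum_sub_distrib]
      exact Finset.sum_congr rfl fun s _ => by ring]
    rw [show ∑ s, p s * Real.log (p s) / βd = (∑ s, p s * Real.log (p s)) / βd from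
      (Finset.sum_div _ _ _).symm]
    rw [show ∑ s, p s * Real.log (1 - ∑ k, p k) / βd
        = (∑ s, p s) * Real.log (1 - ∑ k, p k) / βd by
      rw [Finset.sum_mul, Finset.sum_div]]
    rw [hc0]
    field_simp
    rw [Finset.sum_congr rfl fun x _ => (show p x * (βd * (r + v x) - (βc + β x)) / βd = p x * ((r + v x) * βd - (βc + β x)) / βd by ring)]
    ring
  have hz := hD hx hy ha hb hab
  rw [heq x hx, heq y hy, heq _ hz]
  exact hF.2 hx hy ha hb hab
end
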